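/- Let m, n be positive integers and let V = Matrix (Fin m × Fin n) (Fin m × Fin n) ℂ, viewed as a ℂ-vector space. For x ∈ V let Lₓ, Rₓ : V → V denote the linear maps of left and right multiplication by x, and let T : V → V be the linear map T(v) = E(v) ⊗ₖ 1ₙ, where E is the normalized partial trace E(v) i j = (1/n) ∑ₖ v (i,k) (j,k). Then the unital ℂ-subalgebra of the endomorphism algebra End(V) generated by the set {Lₓ : x ∈ V} ∪ {T} equals the centralizer in End(V) of the set {R_{c ⊗ₖ 1ₙ} : c : Matrix (Fin m) (Fin m) ℂ}. -/

import Mathlib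

open Matrix Kronecker

/-- Left multiplication by a matrix unit. -/
private lemma jones_L {I : Type*} [Fintype I] [DecidableEq I]
    (p r : I) (W : Matrix I I ℂ) (s t : I) :
    (Matrix.single p r (1:ℂ) * W) s t = if s = p then W r t else 0 := by
  simp [Matrix.mul_apply, Matrix.single, ite_and, eq_comm]

/-- Entry formula for right multiplication by `Matrix.single s t 1 ⊗ₖ 1`. -/
private lemma jones_H1 {m n : ℕ} (w : Matrix (Fin m × Fin n) (Fin m × Fin n) ℂ)
    (s t : Fin m) (i j : Fin m) (α β : Fin n) :
    (w * (Matrix.single s t (1:ℂ) ⊗ₖ (1 : Matrix (Fin n) (Fin n) ℂ))) (i,α) (j,β)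
      = if j = t then w (i,α) (s,β) else 0 := by
  simp [Matrix.mul_apply, Fintype.sum_prod_type, Matrix.kroneckerMap_apply,
    Matrix.single, Matrix.one_apply, ite_and, eq_comm (a := t)]

/-- Factorization of a matrix unit through the subalgebra `N ⊗ 1`. -/
private lemma jones_H2 {m n : ℕ} (j₀ l : Fin m) (δ : Fin n) (p : Fin m × Fin n) :
    Matrix.single p ((l,δ) : Fin m × Fin n) (1:ℂ)
      = Matrix.single p ((j₀,δ) : Fin m × Fin n) 1 *
          (Matrix.single j₀ l (1:ℂ) ⊗ₖ (1 : Matrix (Fin n) (Fin n) ℂ)) := by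
  ext ⟨a, μ⟩ ⟨b, ν⟩
  rw [jones_H1]
  simp only [Matrix.single, Matrix.of_apply, Prod.mk.injEq]
  aesop

theorem stmt_16
    (m n : ℕ) (hm : 0 < m) (hn : 0 < n)
    (E : Matrix (Fin m × Fin n) (Fin m × Fin n) ℂ → Matrix (Fin m) (Fin m) ℂ)
    (hE : ∀ (v : Matrix (Fin m × Fin n) (Fin m × Fin n) ℂ) (i j : Fin m),
      E v i j = (1 / (n : ℂ)) * ∑ k : Fin n, v (i, k) (j, k))
    (T : Module.End ℂ (Matrix (Fin m × Fin n) (Fin m × Fin n) ℂ))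
    (hT : ∀ v : Matrix (Fin m × Fin n) (Fin m × Fin n) ℂ,
      T v = E v ⊗ₖ (1 : Matrix (Fin n) (Fin n) ℂ)) :
    Algebra.adjoin ℂ
        ((Set.range fun x : Matrix (Fin m × Fin n) (Fin m × Fin n) ℂ =>
          (LinearMap.mulLeft ℂ x :
            Module.End ℂ (Matrix (Fin m × Fin n) (Fin m × Fin n) ℂ))) ∪ {T}) =
      Subalgebra.centralizer ℂ
        (Set.range fun c : Matrix (Fin m) (Fin m) ℂ =>
          (LinearMap.mulRight ℂ (c ⊗ₖ (1 : Matrix (Fin n) (Fin n) ℂ)) :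
            Module.End ℂ (Matrix (Fin m × Fin n) (Fin m × Fin n) ℂ))) := by
  have hn' : (n : ℂ) ≠ 0 := Nat.cast_ne_zero.mpr hn.ne'
  apply le_antisymm
  · -- adjoin ≤ centralizer
    rw [Algebra.adjoin_le_iff]
    rintro g (⟨x, rfl⟩ | rfl)
    · rw [SetLike.mem_coe, Subalgebra.mem_centralizer_iff]
      rintro _ ⟨c, rfl⟩
      exact (LinearMap.commute_mulLeft_right x _).symm.eq
    · rw [SetLike.mem_coe, Subalgebra.mem_centralizer_iff]
      rintro _ ⟨c, rfl⟩
      apply LinearMap.ext; intro v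
      rw [Module.End.mul_apply, Module.End.mul_apply, LinearMap.mulRight_apply,
        LinearMap.mulRight_apply, hT, hT]
      have h1 : (E v ⊗ₖ (1 : Matrix (Fin n) (Fin n) ℂ)) * (c ⊗ₖ 1)
          = (E v * c) ⊗ₖ (1 : Matrix (Fin n) (Fin n) ℂ) := by
        rw [← Matrix.mul_kronecker_mul, one_mul]
      have hEc : E (v * (c ⊗ₖ (1 : Matrix (Fin n) (Fin n) ℂ))) = E v * c := by
        ext i j
        have h2 : ∀ κ : Fin n, (v * (c ⊗ₖ (1 : Matrix (Fin n) (Fin n) ℂ))) (i,κ) (j,κ)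
            = ∑ p : Fin m, v (i,κ) (p,κ) * c p j := by
          intro κ
          simp [Matrix.mul_apply, Fintype.sum_prod_type, Matrix.kroneckerMap_apply,
            Matrix.one_apply, mul_comm]
        rw [hE, Matrix.mul_apply]
        calc (1 / (n:ℂ)) * ∑ κ : Fin n,
              (v * (c ⊗ₖ (1 : Matrix (Fin n) (Fin n) ℂ))) (i,κ) (j,κ)
            = (1 / (n:ℂ)) * ∑ κ : Fin n, ∑ p : Fin m, v (i,κ) (p,κ) * c p j := by
              rw [Finset.sum_congr rfl fun κ _ => h2 κ]
          _ = ∑ p : Fin m, (1 / (n:ℂ)) * ∑ κ : Fin n, v (i,κ) (p,κ) * c p j := by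
              rw [Finset.sum_comm, Finset.mul_sum]
          _ = ∑ p : Fin m, E v i p * c p j := by
              refine Finset.sum_congr rfl fun p _ => ?_
              rw [hE, mul_assoc, Finset.sum_mul]
      rw [h1, hEc]
  · -- centralizer ≤ adjoin
    intro F hF
    rw [Subalgebra.mem_centralizer_iff] at hF
    have hcomm : ∀ (c : Matrix (Fin m) (Fin m) ℂ)
        (w : Matrix (Fin m × Fin n) (Fin m × Fin n) ℂ),
        F (w * (c ⊗ₖ 1)) = F w * (c ⊗ₖ 1) := by
      intro c w
      have h := hF _ ⟨c, rfl⟩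
      exact congrArg (fun g : Module.End ℂ _ => g w) h.symm
    set j₀ : Fin m := ⟨0, hm⟩ with hj₀
    have hcol : ∀ (p : Fin m × Fin n) (l : Fin m) (δ : Fin n) (i j : Fin m) (α β : Fin n),
        F (Matrix.single p ((l,δ) : Fin m × Fin n) 1) (i,α) (j,β)
          = if j = l then F (Matrix.single p ((j₀,δ) : Fin m × Fin n) 1) (i,α) (j₀,β) else 0 := by
      intro p l δ i j α β
      rw [jones_H2 j₀ l δ p, hcomm, jones_H1]
    have hFeq : F = ∑ q : Fin m × Fin n, ∑ δ : Fin n, ∑ p : Fin m × Fin n, ∑ β' : Fin n,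
        ((n : ℂ) * F (Matrix.single q ((j₀,δ) : Fin m × Fin n) 1) p (j₀,β')) •
          (LinearMap.mulLeft ℂ (Matrix.single p ((j₀,β') : Fin m × Fin n) 1) * T *
            LinearMap.mulLeft ℂ (Matrix.single ((j₀,δ) : Fin m × Fin n) q 1)) := by
      apply LinearMap.ext; intro v
      have h0 : F v = ∑ p : Fin m × Fin n, ∑ q : Fin m × Fin n,
          v p q • F (Matrix.single p q 1) := by
        conv_lhs => rw [matrix_eq_sum_single v]
        rw [map_sum]
        refine Finset.sum_congr rfl fun p _ => ?_
        rw [map_sum]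
        refine Finset.sum_congr rfl fun q _ => ?_
        rw [← F.map_smul, smul_single, smul_eq_mul, mul_one]
      ext ⟨i, α⟩ ⟨j, β⟩
      have hLHS : F v (i,α) (j,β) = ∑ q : Fin m × Fin n, ∑ δ : Fin n,
          v q (j,δ) * F (Matrix.single q ((j₀,δ) : Fin m × Fin n) 1) (i,α) (j₀,β) := by
        rw [h0]
        simp only [Matrix.sum_apply, Matrix.smul_apply, smul_eq_mul]
        refine Finset.sum_congr rfl fun q _ => ?_
        rw [Fintype.sum_prod_type, Finset.sum_comm]
        refine Finset.sum_congr rfl fun δ _ => ?_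
        have hstep : ∀ l : Fin m,
            v q (l,δ) * F (Matrix.single q ((l,δ) : Fin m × Fin n) 1) (i,α) (j,β)
              = if j = l then
                  v q (j,δ) * F (Matrix.single q ((j₀,δ) : Fin m × Fin n) 1) (i,α) (j₀,β)
                else 0 := by
          intro l
          rw [hcol]
          by_cases h : j = l <;> simp [h]
        rw [Finset.sum_congr rfl fun l _ => hstep l, Finset.sum_ite_eq]
        simp
      rw [hLHS]
      -- RHS
      have hterm : ∀ (p q : Fin m × Fin n) (β' δ : Fin n),
          ((Matrix.single p ((j₀,β') : Fin m × Fin n) (1:ℂ) *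
            T (Matrix.single ((j₀,δ) : Fin m × Fin n) q 1 * v) :
              Matrix (Fin m × Fin n) (Fin m × Fin n) ℂ)) (i,α) (j,β)
          = if β' = β ∧ p = (i,α) then (1 / (n:ℂ)) * v q (j,δ) else 0 := by
        intro p q β' δ
        have hEyv : ∀ (a b : Fin m),
            E (Matrix.single ((j₀,δ) : Fin m × Fin n) q 1 * v) a b
              = if a = j₀ then (1/(n:ℂ)) * v q (b,δ) else 0 := by
          intro a b
          rw [hE]
          simp only [jones_L, Prod.mk.injEq, ite_and]
          by_cases h : a = j₀ <;> simp [h]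
        rw [hT, jones_L]
        simp only [Matrix.kroneckerMap_apply, hEyv, if_pos rfl, Matrix.one_apply]
        by_cases h1 : β' = β <;> by_cases h2 : p = (i,α) <;>
          simp [h1, h2, eq_comm, mul_comm]
      simp only [LinearMap.sum_apply, Matrix.sum_apply, LinearMap.smul_apply,
        Matrix.smul_apply, smul_eq_mul, Module.End.mul_apply, LinearMap.mulLeft_apply,
        hterm, mul_ite, mul_zero, ite_and]
      simp only [Finset.sum_ite_eq', Finset.mem_univ, if_true]
      refine Finset.sum_congr rfl fun q _ => ?_
      refine Finset.sum_congr rfl fun δ _ => ?_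
      field_simp
    rw [hFeq]
    apply Subalgebra.sum_mem; intro q _
    apply Subalgebra.sum_mem; intro δ _
    apply Subalgebra.sum_mem; intro p _
    apply Subalgebra.sum_mem; intro β' _
    apply Subalgebra.smul_mem
    apply mul_mem
    apply mul_mem
    · exact Algebra.subset_adjoin (Or.inl ⟨_, rfl⟩)
    · exact Algebra.subset_adjoin (Or.inr rfl)
    · exact Algebra.subset_adjoin (Or.inl ⟨_, rfl⟩)
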